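/- (Theorem 8.1, 2°.) In the symmetric setup with A_γ the Friedrichs extension of A_min, let Ã ∈ M be closed, corresponding to T : V → W. If m(Ã) > −∞, then V ⊂ W and m(T) ≥ m(Ã). -/

import Mathlib

noncomputable section

open Filter Topology

namespace GrubbExt

variable {H : Type*} [NormedAddCommGroup H] [InnerProductSpace ℂ H] [CompleteSpace H]

/-- The inclusion of a closed subspace composed with the orthogonal projection onto it,
as a continuous linear map `H →L[ℂ] H`.  This is `i_K ∘ pr_K` in the notation of the paper. -/
def projCl (K : Submodule ℂ H) (hK : IsClosed (K : Set H)) : H →L[ℂ] H :=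
  haveI : CompleteSpace K := hK.completeSpace_coe
  K.subtypeL.comp (K.orthogonalProjectionOnto)

/-- `R` is the (everywhere defined, bounded) inverse of `P - lam`. -/
structure IsResolvent (P : H →ₗ.[ℂ] H) (lam : ℂ) (R : H →L[ℂ] H) : Prop where
  mem : ∀ f : H, R f ∈ P.domain
  left : ∀ u : P.domain, R (P u - lam • (u : H)) = u
  right : ∀ f : H, P ⟨R f, mem f⟩ - lam • R f = f

/-- `E^λ := I + λ(A_γ - λ)^{-1}`, given the resolvent `R = (A_γ - λ)^{-1}`. -/
def Eop (lam : ℂ) (R : H →L[ℂ] H) : H →L[ℂ] H := ContinuousLinearMap.id ℂ H + lam • R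

/-- `E'^{λ̄} := I + λ̄(A_γ^* - λ̄)^{-1}`, given the resolvent `R' = (A_γ^* - λ̄)^{-1}`. -/
def Eop' (lam : ℂ) (R' : H →L[ℂ] H) : H →L[ℂ] H :=
  ContinuousLinearMap.id ℂ H + (starRingEnd ℂ lam) • R'

/-- The resolvent set of a partially defined operator. -/
def resSet (P : H →ₗ.[ℂ] H) : Set ℂ := {lam | ∃ R : H →L[ℂ] H, IsResolvent P lam R}

/-- The set of "Rayleigh quotients" `Re⟨Pu,u⟩` over unit vectors `u` in the domain of `P`;
the lower bound `m(P)` is the infimum of this set. -/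
def raySet (P : H →ₗ.[ℂ] H) : Set ℝ :=
  {r | ∃ u : P.domain, ‖(u : H)‖ = 1 ∧ r = (inner ℂ (P u) (u : H) : ℂ).re}

/-- The abstract set-up of Grubb's extension theory: a dual pair `A_min, A'_min` of closed
densely defined operators in a Hilbert space `H`, together with a reference operator `A_γ`
lying between `A_min` and `A_max := (A'_min)*`, which is bijective with bounded inverse
(and whose adjoint is likewise bijective with bounded inverse). -/
structure Setup (H : Type*) [NormedAddCommGroup H] [InnerProductSpace ℂ H]
    [CompleteSpace H] where
  Amin : H →ₗ.[ℂ] H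
  Amin' : H →ₗ.[ℂ] H
  closed_Amin : IsClosed (Amin.graph : Set (H × H))
  closed_Amin' : IsClosed (Amin'.graph : Set (H × H))
  dense_Amin : Dense (Amin.domain : Set H)
  dense_Amin' : Dense (Amin'.domain : Set H)
  Amin_le_max : Amin ≤ Amin'.adjoint
  Amin'_le_max' : Amin' ≤ Amin.adjoint
  Agam : H →ₗ.[ℂ] H
  Amin_le_Agam : Amin ≤ Agam
  Agam_le_max : Agam ≤ Amin'.adjoint
  Agaminv : H →L[ℂ] H
  Agaminv_mem : ∀ f : H, Agaminv f ∈ Agam.domain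
  Agaminv_left : ∀ u : Agam.domain, Agaminv (Agam u) = u
  Agaminv_right : ∀ f : H, Agam ⟨Agaminv f, Agaminv_mem f⟩ = f
  Agamstarinv : H →L[ℂ] H
  Agamstarinv_mem : ∀ f : H, Agamstarinv f ∈ Agam.adjoint.domain
  Agamstarinv_left : ∀ v : Agam.adjoint.domain, Agamstarinv (Agam.adjoint v) = v
  Agamstarinv_right : ∀ f : H, Agam.adjoint ⟨Agamstarinv f, Agamstarinv_mem f⟩ = f

namespace Setup

variable (S : Setup H)

/-- `A_max := (A'_min)*`. -/
def Amax : H →ₗ.[ℂ] H := S.Amin'.adjoint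

/-- `A'_max := (A_min)*`. -/
def Amax' : H →ₗ.[ℂ] H := S.Amin.adjoint

/-- `u_ζ := u - A_γ^{-1} A_max u`, the nullspace component of `u ∈ D(A_max)`. -/
def uzeta (u : S.Amax.domain) : H := (u : H) - S.Agaminv (S.Amax u)

/-- `v_{ζ'} := v - (A_γ^*)^{-1} A'_max v`, the nullspace component of `v ∈ D(A'_max)`. -/
def vzeta (v : S.Amax'.domain) : H := (v : H) - S.Agamstarinv (S.Amax' v)

/-- `Z := ker A_max`, as a submodule of `H`. -/
def Zker : Submodule ℂ H := (LinearMap.ker S.Amax.toFun).map S.Amax.domain.subtype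

/-- `Z' := ker A'_max`, as a submodule of `H`. -/
def Zker' : Submodule ℂ H := (LinearMap.ker S.Amax'.toFun).map S.Amax'.domain.subtype

lemma coe_Zker :
    (S.Zker : Set H) = ⋂ v : S.Amin'.domain, {y : H | (inner ℂ y (S.Amin' v) : ℂ) = 0} := by
  ext y
  simp only [Set.mem_iInter, Set.mem_setOf_eq, SetLike.mem_coe, Zker, Submodule.mem_map,
    LinearMap.mem_ker]
  constructor
  · rintro ⟨u, hu, rfl⟩ v
    have h := (LinearPMap.adjoint_isFormalAdjoint S.dense_Amin') u v
    have hu' : S.Amin'.adjoint u = 0 := hu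
    rw [hu'] at h
    simpa using h.symm
  · intro h
    have hmem : y ∈ S.Amax.domain := by
      refine LinearPMap.mem_adjoint_domain_of_exists _ ⟨0, fun x => ?_⟩
      simp [h x]
    refine ⟨⟨y, hmem⟩, ?_, rfl⟩
    exact LinearPMap.adjoint_apply_eq S.dense_Amin' ⟨y, hmem⟩ fun x => by simp [h x]

lemma isClosed_Zker : IsClosed (S.Zker : Set H) := by
  rw [S.coe_Zker]
  exact isClosed_iInter fun v =>
    isClosed_eq (Continuous.inner continuous_id continuous_const) continuous_const

lemma coe_Zker' :
    (S.Zker' : Set H) = ⋂ v : S.Amin.domain, {y : H | (inner ℂ y (S.Amin v) : ℂ) = 0} := by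
  ext y
  simp only [Set.mem_iInter, Set.mem_setOf_eq, SetLike.mem_coe, Zker', Submodule.mem_map,
    LinearMap.mem_ker]
  constructor
  · rintro ⟨u, hu, rfl⟩ v
    have h := (LinearPMap.adjoint_isFormalAdjoint S.dense_Amin) u v
    have hu' : S.Amin.adjoint u = 0 := hu
    rw [hu'] at h
    simpa using h.symm
  · intro h
    have hmem : y ∈ S.Amax'.domain := by
      refine LinearPMap.mem_adjoint_domain_of_exists _ ⟨0, fun x => ?_⟩
      simp [h x]
    refine ⟨⟨y, hmem⟩, ?_, rfl⟩
    exact LinearPMap.adjoint_apply_eq S.dense_Amin ⟨y, hmem⟩ fun x => by simp [h x]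

lemma isClosed_Zker' : IsClosed (S.Zker' : Set H) := by
  rw [S.coe_Zker']
  exact isClosed_iInter fun v =>
    isClosed_eq (Continuous.inner continuous_id continuous_const) continuous_const

/-- The orthogonal projection onto `Z = ker A_max`. -/
def projZ : H →L[ℂ] H := projCl S.Zker S.isClosed_Zker

/-- The orthogonal projection onto `Z' = ker A'_max`. -/
def projZ' : H →L[ℂ] H := projCl S.Zker' S.isClosed_Zker'

variable (At : H →ₗ.[ℂ] H)

/-- `D(T) = {u_ζ : u ∈ D(Ã)}`, the set of nullspace components of elements of `D(Ã)`. -/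
def dzeta : Set H := {x | ∃ u : S.Amax.domain, (u : H) ∈ At.domain ∧ x = S.uzeta u}

/-- `{v_{ζ'} : v ∈ D(Ã*)}`. -/
def dzeta' : Set H := {x | ∃ v : S.Amax'.domain, (v : H) ∈ At.adjoint.domain ∧ x = S.vzeta v}

/-- `V := closure {u_ζ : u ∈ D(Ã)}`. -/
def Vsub : Submodule ℂ H := (Submodule.span ℂ (S.dzeta At)).topologicalClosure

/-- `W := closure {v_{ζ'} : v ∈ D(Ã*)}`. -/
def Wsub : Submodule ℂ H := (Submodule.span ℂ (S.dzeta' At)).topologicalClosure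

lemma isClosed_Vsub : IsClosed ((S.Vsub At : Set H)) :=
  Submodule.isClosed_topologicalClosure _

lemma isClosed_Wsub : IsClosed ((S.Wsub At : Set H)) :=
  Submodule.isClosed_topologicalClosure _

/-- The orthogonal projection onto `V`. -/
def projV : H →L[ℂ] H := projCl (S.Vsub At) (S.isClosed_Vsub At)

/-- The orthogonal projection onto `W`. -/
def projW : H →L[ℂ] H := projCl (S.Wsub At) (S.isClosed_Wsub At)

/-- The set `{(u_ζ, pr_W (A_max u)) : u ∈ D(Ã)}`, for a general closed subspace `W`. -/
def TgraphOn (W : Submodule ℂ H) (hW : IsClosed (W : Set H)) : Set (H × H) :=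
  {p | ∃ u : S.Amax.domain, (u : H) ∈ At.domain ∧ p.1 = S.uzeta u ∧
    p.2 = projCl W hW (S.Amax u)}

/-- The graph of the operator `T : V → W` corresponding to `Ã`. -/
def Tgraph : Set (H × H) := S.TgraphOn At (S.Wsub At) (S.isClosed_Wsub At)


/-- `F^λ := I - λ A_γ^{-1}`. -/
def Fop (lam : ℂ) : H →L[ℂ] H := ContinuousLinearMap.id ℂ H - lam • S.Agaminv

/-- `F'^{λ̄} := I - λ̄ (A_γ^*)^{-1}`. -/
def Fop' (lam : ℂ) : H →L[ℂ] H := ContinuousLinearMap.id ℂ H - (starRingEnd ℂ lam) • S.Agamstarinv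

/-- `Z_λ := ker(A_max - λ)`, as a subset of `H`. -/
def ZkerL (lam : ℂ) : Set H :=
  {x | ∃ hx : x ∈ S.Amax.domain, S.Amax ⟨x, hx⟩ = lam • x}

/-- `Z'_{λ̄} := ker(A'_max - λ̄)`, as a subset of `H`. -/
def ZkerL' (lam : ℂ) : Set H :=
  {x | ∃ hx : x ∈ S.Amax'.domain, S.Amax' ⟨x, hx⟩ = (starRingEnd ℂ lam) • x}

/-- `pr^λ_ζ u := u - (A_γ - λ)^{-1}(A_max - λ)u`, given the resolvent `R = (A_γ - λ)^{-1}`. -/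
def uzetaL (lam : ℂ) (R : H →L[ℂ] H) (u : S.Amax.domain) : H :=
  (u : H) - R (S.Amax u - lam • (u : H))

/-- `pr^{λ̄}_{ζ'} v := v - (A_γ^* - λ̄)^{-1}(A'_max - λ̄)v`,
given the resolvent `R' = (A_γ^* - λ̄)^{-1}`. -/
def vzetaL (lam : ℂ) (R' : H →L[ℂ] H) (v : S.Amax'.domain) : H :=
  (v : H) - R' (S.Amax' v - (starRingEnd ℂ lam) • (v : H))

/-- `D(T^λ) = {pr^λ_ζ u : u ∈ D(Ã)}`. -/
def dzetaL (lam : ℂ) (R : H →L[ℂ] H) : Set H :=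
  {x | ∃ u : S.Amax.domain, (u : H) ∈ At.domain ∧ x = S.uzetaL lam R u}

/-- `{pr^{λ̄}_{ζ'} v : v ∈ D(Ã*)}`. -/
def dzetaL' (lam : ℂ) (R' : H →L[ℂ] H) : Set H :=
  {x | ∃ v : S.Amax'.domain, (v : H) ∈ At.adjoint.domain ∧ x = S.vzetaL lam R' v}

/-- `V_λ := closure {pr^λ_ζ u : u ∈ D(Ã)}`. -/
def VLsub (lam : ℂ) (R : H →L[ℂ] H) : Submodule ℂ H :=
  (Submodule.span ℂ (S.dzetaL At lam R)).topologicalClosure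

/-- `W_{λ̄} := closure {pr^{λ̄}_{ζ'} v : v ∈ D(Ã*)}`. -/
def WLsub (lam : ℂ) (R' : H →L[ℂ] H) : Submodule ℂ H :=
  (Submodule.span ℂ (S.dzetaL' At lam R')).topologicalClosure

lemma isClosed_WLsub (lam : ℂ) (R' : H →L[ℂ] H) : IsClosed ((S.WLsub At lam R' : Set H)) :=
  Submodule.isClosed_topologicalClosure _

/-- The orthogonal projection onto `W_{λ̄}`. -/
def projWL (lam : ℂ) (R' : H →L[ℂ] H) : H →L[ℂ] H :=
  projCl (S.WLsub At lam R') (S.isClosed_WLsub At lam R')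

/-- The graph of the operator `T^λ : V_λ → W_{λ̄}` corresponding to `Ã - λ`:
`{(pr^λ_ζ u, pr_{W_{λ̄}}((A_max - λ)u)) : u ∈ D(Ã)}`. -/
def TgraphL (lam : ℂ) (R R' : H →L[ℂ] H) : Set (H × H) :=
  {p | ∃ u : S.Amax.domain, (u : H) ∈ At.domain ∧ p.1 = S.uzetaL lam R u ∧
    p.2 = S.projWL At lam R' (S.Amax u - lam • (u : H))}

/-- `G^λ_{V,W} x := -pr_W (λ E^λ x)`, where `W = W(Ã)`. -/
def Gval (lam : ℂ) (R : H →L[ℂ] H) (x : H) : H :=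
  -(S.projW At (lam • Eop lam R x))

/-- `G^μ_{Z,Z} z := -pr_Z (μ E^μ z)`. -/
def GZval (lam : ℂ) (R : H →L[ℂ] H) (x : H) : H :=
  -(S.projZ (lam • Eop lam R x))

lemma mem_Amax_res {lam : ℂ} {Rt : H →L[ℂ] H} (h2 : At ≤ S.Amax)
    (hRt : IsResolvent At lam Rt) (w : H) :
    S.Agaminv w - Rt (w - lam • S.Agaminv w) ∈ S.Amax.domain :=
  Submodule.sub_mem _ (S.Agam_le_max.1 (S.Agaminv_mem w)) (h2.1 (hRt.mem _))

/-- `M(λ) w := pr_ζ ((I - (Ã - λ)^{-1}(A_max - λ)) A_γ^{-1} w)`, the value of the abstract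
`M`-function on `w`. -/
def Mval {lam : ℂ} {Rt : H →L[ℂ] H} (h2 : At ≤ S.Amax) (hRt : IsResolvent At lam Rt)
    (w : H) : H :=
  S.uzeta ⟨S.Agaminv w - Rt (w - lam • S.Agaminv w), S.mem_Amax_res At h2 hRt w⟩

end Setup


section AuxiliaryLemmas

lemma ray_bound (P : H →ₗ.[ℂ] H) {c : ℝ} (h : ∀ r ∈ raySet P, c ≤ r) (x : P.domain) :
    c * ‖(x : H)‖ ^ 2 ≤ (inner ℂ (P x) (x : H) : ℂ).re := by
  by_cases hx : (x : H) = 0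
  · have hx0 : x = 0 := Subtype.ext hx
    simp [hx0]
  · have hn : (0:ℝ) < ‖(x:H)‖ := norm_pos_iff.mpr hx
    set t : ℝ := ‖(x:H)‖ with ht
    set y : P.domain := ((t⁻¹ : ℝ) : ℂ) • x with hy
    have hyc : (y : H) = ((t⁻¹ : ℝ) : ℂ) • (x : H) := rfl
    have hnorm : ‖(y : H)‖ = 1 := by
      rw [hyc, norm_smul]
      simp only [Complex.norm_real, Real.norm_eq_abs, abs_inv, abs_of_pos hn]
      field_simp
      exact ht.symm
    have hray : ((inner ℂ (P y) ((y : H)) : ℂ)).re ∈ raySet P := ⟨y, hnorm, rfl⟩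
    have hc := h _ hray
    rw [hy, LinearPMap.map_smul] at hc
    rw [hyc] at hc
    rw [inner_smul_left, inner_smul_right, Complex.conj_ofReal, ← mul_assoc,
      ← Complex.ofReal_mul, Complex.re_ofReal_mul] at hc
    have h2 : c * (t * t) ≤ (t⁻¹ * t⁻¹) * (inner ℂ (P x) (x:H) : ℂ).re * (t * t) := by
      nlinarith [sq_nonneg t]
    calc c * ‖(x:H)‖^2 = c * (t * t) := by rw [ht]; ring
      _ ≤ _ := h2.trans_eq (by field_simp)

lemma adjoint_mono {P Q : H →ₗ.[ℂ] H} (hPd : Dense (P.domain : Set H)) (hPQ : P ≤ Q) :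
    Q.adjoint ≤ P.adjoint := by
  have hQd : Dense (Q.domain : Set H) := hPd.mono (fun x hx => hPQ.1 hx)
  have hfa := LinearPMap.adjoint_isFormalAdjoint hQd
  constructor
  · intro y hy
    refine LinearPMap.mem_adjoint_domain_of_exists _ ⟨Q.adjoint ⟨y, hy⟩, fun x => ?_⟩
    have h1 := hfa ⟨y, hy⟩ ⟨(x : H), hPQ.1 x.2⟩
    rw [h1, ← hPQ.2 (x := x) (y := ⟨(x : H), hPQ.1 x.2⟩) rfl]
  · intro x y hxy
    refine (LinearPMap.adjoint_apply_eq hPd y (x₀ := Q.adjoint x) fun v => ?_).symm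
    have h1 := hfa x ⟨(v : H), hPQ.1 v.2⟩
    rw [h1, ← hPQ.2 (x := v) (y := ⟨(v : H), hPQ.1 v.2⟩) rfl, hxy]

lemma mem_of_forall_adjoint_inner {P : H →ₗ.[ℂ] H} (hd : Dense (P.domain : Set H))
    (hcl : IsClosed (P.graph : Set (H × H))) {g y : H}
    (h : ∀ v : P.adjoint.domain, (inner ℂ (P.adjoint v) g : ℂ) = inner ℂ (v : H) y) :
    (g, y) ∈ P.graph := by
  classical
  set e := WithLp.linearEquiv 2 ℂ (H × H) with he
  set G : Submodule ℂ (WithLp 2 (H × H)) := P.graph.comap (e : WithLp 2 (H × H) →ₗ[ℂ] H × H)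
    with hG
  have hGc : IsClosed (G : Set (WithLp 2 (H × H))) := by
    have : (G : Set (WithLp 2 (H × H))) = (WithLp.equiv 2 (H × H)) ⁻¹' (P.graph : Set (H × H)) :=
      rfl
    rw [this]
    exact hcl.preimage (WithLp.prod_continuous_ofLp 2 H H)
  haveI : CompleteSpace G := hGc.completeSpace_coe
  by_contra hng
  have hpG : e.symm (g, y) ∉ G := by
    intro hmem
    have h2 : e (e.symm (g, y)) ∈ P.graph := hmem
    rw [LinearEquiv.apply_symm_apply] at h2
    exact hng h2
  set p : WithLp 2 (H × H) := e.symm (g, y) with hp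
  set q : WithLp 2 (H × H) := p - (G.orthogonalProjectionOnto p : WithLp 2 (H × H)) with hq
  have hqo : q ∈ Gᗮ := Submodule.sub_starProjection_mem_orthogonal p
  have hqne : q ≠ 0 := by
    intro h0
    apply hpG
    have : p = (G.orthogonalProjectionOnto p : WithLp 2 (H × H)) := by
      rwa [hq, sub_eq_zero] at h0
    rw [this]
    exact SetLike.coe_mem _
  set a : H := (e q).1 with ha
  set b : H := (e q).2 with hb
  have hqab : ∀ u : WithLp 2 (H × H), (inner ℂ u q : ℂ) = inner ℂ (e u).1 a + inner ℂ (e u).2 b := by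
    intro u
    rfl
  have horto : ∀ x : P.domain, (inner ℂ ((x : H)) a : ℂ) + inner ℂ (P x) b = 0 := by
    intro x
    have hmem : e.symm ((x : H), P x) ∈ G := by
      simp only [hG, Submodule.mem_comap]
      simpa using P.mem_graph x
    have h0 := (Submodule.mem_orthogonal G q).mp hqo _ hmem
    rw [hqab] at h0
    simpa using h0
  have hbmem : b ∈ P.adjoint.domain := by
    refine LinearPMap.mem_adjoint_domain_of_exists _ ⟨-a, fun x => ?_⟩
    have h0 := horto x
    have h1 := congrArg (starRingEnd ℂ) h0
    simp only [map_add, inner_conj_symm, map_zero] at h1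
    rw [inner_neg_left]
    linear_combination -h1
  have hbval : P.adjoint ⟨b, hbmem⟩ = -a := by
    refine LinearPMap.adjoint_apply_eq hd _ fun x => ?_
    have h0 := horto x
    have h1 := congrArg (starRingEnd ℂ) h0
    simp only [map_add, inner_conj_symm, map_zero] at h1
    rw [inner_neg_left]
    linear_combination -h1
  have hkey := h ⟨b, hbmem⟩
  rw [hbval] at hkey
  have hqp : (inner ℂ q p : ℂ) = inner ℂ a g + inner ℂ b y := by
    have h2 : (inner ℂ q p : ℂ) = starRingEnd ℂ (inner ℂ p q) := (inner_conj_symm _ _).symm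
    rw [hqab p] at h2
    have hep : e p = (g, y) := by simp [hp]
    rw [hep] at h2
    simp only [map_add, inner_conj_symm] at h2
    exact h2
  have hqperp : (inner ℂ q ((G.orthogonalProjectionOnto p : WithLp 2 (H × H))) : ℂ) = 0 :=
    (Submodule.mem_orthogonal' G q).mp hqo _ (SetLike.coe_mem _)
  have hqq : (inner ℂ q p : ℂ) = (‖q‖ : ℂ) ^ 2 := by
    have h3 : p = q + (G.orthogonalProjectionOnto p : WithLp 2 (H × H)) := by rw [hq]; abel
    rw [h3, inner_add_right, hqperp, add_zero, inner_self_eq_norm_sq_to_K]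
    norm_cast
  have hzero : (inner ℂ a g : ℂ) + inner ℂ b y = 0 := by
    rw [inner_neg_left] at hkey
    linear_combination -hkey
  rw [hqp, hzero] at hqq
  have h4 : ‖q‖ = 0 := by
    have h5 := hqq.symm
    simpa [pow_eq_zero_iff] using h5
  exact hqne (norm_eq_zero.mp h4)

lemma energy_tendsto (P : H →ₗ.[ℂ] H)
    (hsym : ∀ a b : P.domain, (inner ℂ (P a) ((b : H)) : ℂ) = inner ℂ ((a : H)) (P b))
    {c0 : ℝ} (hc0 : 0 ≤ c0) (hlb : ∀ r ∈ raySet P, c0 ≤ r)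
    (u : P.domain) (f : ℕ → P.domain)
    (hf1 : Tendsto (fun n => ((f n : H))) atTop (𝓝 (u : H)))
    (hf2 : Tendsto (fun p : ℕ × ℕ =>
      (inner ℂ (P (f p.1 - f p.2)) ((f p.1 : H) - (f p.2 : H)) : ℂ)) atTop (𝓝 0)) :
    Tendsto (fun n => (inner ℂ (P (u - f n)) (((u : H) - (f n : H))) : ℂ).re) atTop (𝓝 0) := by
  set w : ℕ → P.domain := fun n => u - f n with hw
  have hwc : ∀ n, ((w n : H)) = (u : H) - (f n : H) := fun n => rfl
  set cre : ℕ → ℝ := fun n => (inner ℂ (P (w n)) ((w n : H)) : ℂ).re with hcre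
  have hnn : ∀ n, 0 ≤ cre n := by
    intro n
    have h1 := ray_bound P hlb (w n)
    have h2 : 0 ≤ c0 * ‖(w n : H)‖ ^ 2 := by positivity
    exact h2.trans h1
  have hkey : ∀ n m : ℕ, (inner ℂ (P (f n - f m)) ((f n : H) - (f m : H)) : ℂ).re
      = cre n + cre m - 2 * (inner ℂ (P (w n)) ((w m : H)) : ℂ).re := by
    intro n m
    have h1 : f n - f m = w m - w n := by
      show f n - f m = (u - f m) - (u - f n)
      rw [sub_sub_sub_cancel_left]
    have h2 : ((f n : H) - (f m : H)) = ((w m : H)) - ((w n : H)) := by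
      rw [hwc, hwc]; abel
    rw [h1, h2]
    simp only [LinearPMap.map_sub, inner_sub_left, inner_sub_right]
    have hswap : (inner ℂ (P (w m)) ((w n : H)) : ℂ).re = (inner ℂ (P (w n)) ((w m : H)) : ℂ).re := by
      rw [hsym]
      have h3 : (inner ℂ ((w m : H)) ((P (w n))) : ℂ)
          = starRingEnd ℂ (inner ℂ ((P (w n))) ((w m : H)) : ℂ) := (inner_conj_symm _ _).symm
      rw [h3, Complex.conj_re]
    simp only [Complex.sub_re, Complex.add_re]
    rw [hcre]
    dsimp only
    linarith [hswap]
  have hres : Tendsto (fun n => cre n) atTop (𝓝 0) := by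
    rw [Metric.tendsto_atTop]
    intro ε hε
    obtain ⟨NN, hNN⟩ := (Metric.tendsto_atTop.mp hf2) (ε / 2) (by positivity)
    refine ⟨max NN.1 NN.2, fun n hn => ?_⟩
    have hwm : Tendsto (fun m => ((w m : H))) atTop (𝓝 0) := by
      have h3 := hf1.const_sub ((u : H))
      simp only [sub_self] at h3
      simpa [hwc] using h3
    have hin : Tendsto (fun m => (inner ℂ (P (w n)) ((w m : H)) : ℂ).re) atTop (𝓝 0) := by
      have h4 : Tendsto (fun m => (inner ℂ (P (w n)) ((w m : H)) : ℂ)) atTop (𝓝 0) := by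
        have h5 := Tendsto.inner (𝕜 := ℂ) (tendsto_const_nhds (x := (P (w n) : H))) hwm
        simpa using h5
      have h6 := (Complex.continuous_re.tendsto 0).comp h4
      exact h6
    obtain ⟨M, hM⟩ := (Metric.tendsto_atTop.mp hin) (ε / 4) (by positivity)
    set m := max M (max NN.1 NN.2) with hm
    have hgp := hNN (n, m) (by
      constructor
      · exact le_trans (le_max_left _ _) hn
      · exact le_trans (le_max_right _ _) (le_max_right _ _))
    have him := hM m (le_max_left _ _)
    have hgre : |(inner ℂ (P (f n - f m)) ((f n : H) - (f m : H)) : ℂ).re| < ε / 2 := by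
      have h7 : ‖(inner ℂ (P (f n - f m)) ((f n : H) - (f m : H)) : ℂ)‖ < ε / 2 := by
        simpa [dist_eq_norm] using hgp
      exact lt_of_le_of_lt (Complex.abs_re_le_norm _) h7
    have hire : |(inner ℂ (P (w n)) ((w m : H)) : ℂ).re| < ε / 4 := by
      simpa [Real.dist_eq] using him
    have hcn : cre n ≤ cre n + cre m := le_add_of_nonneg_right (hnn m)
    have heq := hkey n m
    have h10 : cre n < ε := by
      have h8 : cre n + cre m
          = (inner ℂ (P (f n - f m)) ((f n : H) - (f m : H)) : ℂ).re
            + 2 * (inner ℂ (P (w n)) ((w m : H)) : ℂ).re := by linarith [heq]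
      have h9 : cre n + cre m < ε / 2 + 2 * (ε / 4) := by
        rw [h8]
        have := abs_lt.mp hgre
        have := abs_lt.mp hire
        linarith
      linarith
    rw [Real.dist_eq, sub_zero, abs_of_nonneg (hnn n)]
    exact h10
  simpa [hcre, hwc] using hres

namespace Setup

variable (S : Setup H)

lemma agam_dense : Dense (S.Agam.domain : Set H) :=
  S.dense_Amin.mono (fun x hx => S.Amin_le_Agam.1 hx)

lemma agam_symm (hsa : S.Agam.adjoint = S.Agam) (a b : S.Agam.domain) :
    (inner ℂ (S.Agam a) ((b : H)) : ℂ) = inner ℂ ((a : H)) (S.Agam b) := by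
  obtain ⟨deq, feq⟩ := LinearPMap.ext_iff.mp hsa
  have ha : (a : H) ∈ S.Agam.adjoint.domain := by rw [deq]; exact a.2
  have h1 := LinearPMap.adjoint_isFormalAdjoint S.agam_dense ⟨(a : H), ha⟩ b
  have h2 : S.Agam.adjoint ⟨(a : H), ha⟩ = S.Agam a := @feq (a : H) ha a.2
  rw [h2] at h1
  exact h1

lemma agaminv_symm (hsa : S.Agam.adjoint = S.Agam) (a b : H) :
    (inner ℂ (S.Agaminv a) b : ℂ) = inner ℂ a (S.Agaminv b) := by
  set xa : S.Agam.domain := ⟨S.Agaminv a, S.Agaminv_mem a⟩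
  set xb : S.Agam.domain := ⟨S.Agaminv b, S.Agaminv_mem b⟩
  have ha : S.Agam xa = a := S.Agaminv_right a
  have hb : S.Agam xb = b := S.Agaminv_right b
  calc (inner ℂ (S.Agaminv a) b : ℂ) = inner ℂ ((xa : H)) (S.Agam xb) := by rw [hb]
    _ = inner ℂ (S.Agam xa) ((xb : H)) := (S.agam_symm hsa xa xb).symm
    _ = inner ℂ a (S.Agaminv b) := by rw [ha]

lemma agamstarinv_eq (hsa : S.Agam.adjoint = S.Agam) (f : H) :
    S.Agamstarinv f = S.Agaminv f := by
  obtain ⟨deq, feq⟩ := LinearPMap.ext_iff.mp hsa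
  have hmem : S.Agamstarinv f ∈ S.Agam.domain := by rw [← deq]; exact S.Agamstarinv_mem f
  have h1 : S.Agam ⟨S.Agamstarinv f, hmem⟩ = f := by
    rw [← feq (x := S.Agamstarinv f) (hf := S.Agamstarinv_mem f) (hg := hmem)]
    exact S.Agamstarinv_right f
  have h2 := S.Agaminv_left ⟨S.Agamstarinv f, hmem⟩
  rw [h1] at h2
  exact h2.symm

lemma star_ineq (hsym : S.Amin' = S.Amin) (hsa : S.Agam.adjoint = S.Agam)
    (hgpos : ∃ c : ℝ, 0 < c ∧ ∀ r ∈ raySet S.Agam, c ≤ r)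
    (hFr : ∀ u : S.Agam.domain, ∃ f : ℕ → S.Amin.domain,
      Tendsto (fun n => ((f n : H))) atTop (𝓝 (u : H)) ∧
      Tendsto (fun p : ℕ × ℕ =>
        (inner ℂ (S.Amin (f p.1 - f p.2)) ((f p.1 : H) - (f p.2 : H)) : ℂ))
        atTop (𝓝 0))
    (At : H →ₗ.[ℂ] H) (h1 : S.Amin ≤ At) (h2 : At ≤ S.Amax)
    {c : ℝ} (hc : ∀ r ∈ raySet At, c ≤ r)
    (u : S.Amax.domain) (hu : (u : H) ∈ At.domain) :
    c * ‖S.uzeta u‖ ^ 2 ≤ (inner ℂ (S.Amax u) (S.uzeta u) : ℂ).re := by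
  obtain ⟨c0, hc0, hgb⟩ := hgpos
  obtain ⟨deqA, feqA⟩ := LinearPMap.ext_iff.mp hsym
  set ug : S.Agam.domain := ⟨S.Agaminv (S.Amax u), S.Agaminv_mem _⟩ with hug
  have hugv : S.Agam ug = S.Amax u := S.Agaminv_right _
  set z : H := S.uzeta u with hz
  have hzv : z = (u : H) - (ug : H) := rfl
  obtain ⟨f, hf1, hf2⟩ := hFr ug
  set fg : ℕ → S.Agam.domain := fun n => ⟨(f n : H), S.Amin_le_Agam.1 (f n).2⟩ with hfg
  have hfgv : ∀ n, S.Agam (fg n) = S.Amin (f n) := fun n => (S.Amin_le_Agam.2 rfl).symm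
  have hugmax : (ug : H) ∈ S.Amax.domain := S.Agam_le_max.1 ug.2
  set ugm : S.Amax.domain := ⟨(ug : H), hugmax⟩ with hugm
  have hugmv : S.Amax ugm = S.Amax u := by
    have e : S.Agam ug = S.Amax ugm := S.Agam_le_max.2 rfl
    rw [← e]
    exact hugv
  set zel : S.Amax.domain := u - ugm with hzel'
  have hzel : (zel : H) = z := rfl
  have hzel0 : S.Amax zel = 0 := by
    show S.Amax (u - ugm) = 0
    rw [LinearPMap.map_sub, hugmv, sub_self]
  have hmin0 : ∀ v : S.Amin.domain, (inner ℂ (S.Amin v) z : ℂ) = 0 := by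
    intro v
    have hv' : (v : H) ∈ S.Amin'.domain := by rw [deqA]; exact v.2
    have hfa0 := LinearPMap.adjoint_isFormalAdjoint S.dense_Amin' (x := zel) ⟨(v : H), hv'⟩
    have hfa : (inner ℂ (S.Amax zel) ((v : H)) : ℂ) = inner ℂ ((zel : H)) (S.Amin' ⟨(v : H), hv'⟩) :=
      hfa0
    rw [hzel0] at hfa
    have hv2 : S.Amin' ⟨(v : H), hv'⟩ = S.Amin v := @feqA (v : H) hv' v.2
    rw [hv2] at hfa
    have h0 : (inner ℂ z (S.Amin v) : ℂ) = 0 := by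
      rw [hzel] at hfa
      simpa using hfa.symm
    have h1' := congrArg (starRingEnd ℂ) h0
    rw [inner_conj_symm, map_zero] at h1'
    exact h1'
  set xel : ℕ → At.domain := fun n => ⟨(u : H) - (f n : H), sub_mem hu (h1.1 (f n).2)⟩ with hxel
  set fmax : ℕ → S.Amax.domain :=
    fun n => ⟨(f n : H), S.Agam_le_max.1 (S.Amin_le_Agam.1 (f n).2)⟩ with hfmax
  have hatval : ∀ n, At (xel n) = S.Amax u - S.Amin (f n) := by
    intro n
    have e1 : At (xel n) = S.Amax (u - fmax n) := h2.2 rfl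
    rw [e1, LinearPMap.map_sub]
    congr 1
    have e2 : S.Amin (f n) = At ⟨(f n : H), h1.1 (f n).2⟩ := h1.2 rfl
    have e3 : At ⟨(f n : H), h1.1 (f n).2⟩ = S.Amax (fmax n) := h2.2 rfl
    exact (e2.trans e3).symm
  set wg : ℕ → S.Agam.domain := fun n => ug - fg n with hwg
  have hwgc : ∀ n, ((wg n : H)) = (ug : H) - (f n : H) := fun n => rfl
  have hwgv : ∀ n, S.Agam (wg n) = S.Amax u - S.Amin (f n) := by
    intro n
    rw [hwg]
    dsimp only
    rw [LinearPMap.map_sub, hugv, hfgv]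
  have hxc : ∀ n, ((xel n : H)) = ((wg n : H)) + z := by
    intro n
    rw [hwgc, hzv]
    show (u : H) - (f n : H) = ((ug : H) - (f n : H)) + ((u : H) - (ug : H))
    abel
  have hsplit : ∀ n, (inner ℂ (At (xel n)) ((xel n : H)) : ℂ).re
      = (inner ℂ (S.Agam (wg n)) ((wg n : H)) : ℂ).re + (inner ℂ (S.Amax u) z : ℂ).re := by
    intro n
    have hAt : At (xel n) = S.Agam (wg n) := by rw [hatval n, hwgv n]
    rw [hAt, hxc n, inner_add_right, Complex.add_re]
    congr 1
    rw [hwgv n, inner_sub_left, hmin0 (f n), sub_zero]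
  have hray : ∀ n, c * ‖((wg n : H)) + z‖ ^ 2
      ≤ (inner ℂ (S.Agam (wg n)) ((wg n : H)) : ℂ).re + (inner ℂ (S.Amax u) z : ℂ).re := by
    intro n
    have hb := ray_bound At hc (xel n)
    rw [hsplit n] at hb
    rw [← hxc n]
    exact hb
  have hwg0 : Tendsto (fun n => ((wg n : H))) atTop (𝓝 0) := by
    have h3 := hf1.const_sub ((ug : H))
    simp only [sub_self] at h3
    simpa [hwgc] using h3
  have henergy : Tendsto (fun n => (inner ℂ (S.Agam (wg n)) ((wg n : H)) : ℂ).re) atTop (𝓝 0) := by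
    have hfg1 : Tendsto (fun n => ((fg n : H))) atTop (𝓝 ((ug : H))) := hf1
    have hfg2 : Tendsto (fun p : ℕ × ℕ =>
        (inner ℂ (S.Agam (fg p.1 - fg p.2)) ((fg p.1 : H) - (fg p.2 : H)) : ℂ)) atTop (𝓝 0) := by
      have hfun : (fun p : ℕ × ℕ =>
          (inner ℂ (S.Agam (fg p.1 - fg p.2)) ((fg p.1 : H) - (fg p.2 : H)) : ℂ))
          = fun p : ℕ × ℕ =>
          (inner ℂ (S.Amin (f p.1 - f p.2)) ((f p.1 : H) - (f p.2 : H)) : ℂ) := by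
        funext p
        have hv : S.Amin (f p.1 - f p.2) = S.Agam (fg p.1 - fg p.2) := S.Amin_le_Agam.2 rfl
        rw [hv]
      rw [hfun]
      exact hf2
    exact energy_tendsto S.Agam (S.agam_symm hsa) (le_of_lt hc0) hgb ug fg hfg1 hfg2
  have hlhs : Tendsto (fun n => c * ‖((wg n : H)) + z‖ ^ 2) atTop (𝓝 (c * ‖z‖ ^ 2)) := by
    have h01 : Tendsto (fun n => ((wg n : H)) + z) atTop (𝓝 z) := by
      have := hwg0.add (tendsto_const_nhds (x := z))
      simpa using this
    exact ((h01.norm).pow 2).const_mul c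
  have hrhs : Tendsto (fun n =>
      (inner ℂ (S.Agam (wg n)) ((wg n : H)) : ℂ).re + (inner ℂ (S.Amax u) z : ℂ).re) atTop
      (𝓝 (0 + (inner ℂ (S.Amax u) z : ℂ).re)) :=
    henergy.add tendsto_const_nhds
  have hfin := le_of_tendsto_of_tendsto' hlhs hrhs hray
  simpa using hfin

end Setup

end AuxiliaryLemmas

theorem statement_17 (S : Setup H) (hsym : S.Amin' = S.Amin) (hsa : S.Agam.adjoint = S.Agam)
    (hgpos : ∃ c : ℝ, 0 < c ∧ ∀ r ∈ raySet S.Agam, c ≤ r)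
    (hFr : ∀ u : S.Agam.domain, ∃ f : ℕ → S.Amin.domain,
      Tendsto (fun n => ((f n : H))) atTop (𝓝 (u : H)) ∧
      Tendsto (fun p : ℕ × ℕ =>
        (inner ℂ (S.Amin (f p.1 - f p.2)) ((f p.1 : H) - (f p.2 : H)) : ℂ))
        atTop (𝓝 0))
    (At : H →ₗ.[ℂ] H)
    (h1 : S.Amin ≤ At) (h2 : At ≤ S.Amax)
    (hcl : IsClosed (At.graph : Set (H × H)))
    (T : H →ₗ.[ℂ] H) (hT : (T.graph : Set (H × H)) = S.Tgraph At)
    (hbd : ∃ c : ℝ, ∀ r ∈ raySet At, c ≤ r) :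
    S.Vsub At ≤ S.Wsub At ∧
    ∀ c : ℝ, (∀ r ∈ raySet At, c ≤ r) → ∀ r ∈ raySet T, c ≤ r := by
  have hAtd : Dense (At.domain : Set H) := S.dense_Amin.mono (fun x hx => h1.1 hx)
  have key : ∀ {c : ℝ}, (∀ r ∈ raySet At, c ≤ r) → ∀ (u : S.Amax.domain), (u : H) ∈ At.domain →
      c * ‖S.uzeta u‖ ^ 2 ≤ (inner ℂ (S.Amax u) (S.uzeta u) : ℂ).re :=
    fun hc u hu => S.star_ineq hsym hsa hgpos hFr At h1 h2 hc u hu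
  have hadj : At.adjoint ≤ S.Amax' := adjoint_mono S.dense_Amin h1
  haveI : CompleteSpace (S.Wsub At) := (S.isClosed_Wsub At).completeSpace_coe
  obtain ⟨cb, hcb⟩ := hbd
  have hVWmem : ∀ (u : S.Amax.domain), (u : H) ∈ At.domain → S.uzeta u ∈ S.Wsub At := by
    intro u hu
    set z : H := S.uzeta u with hzdef
    set y : H := z - ((S.Wsub At).orthogonalProjectionOnto z : H) with hydef
    have hyo : y ∈ (S.Wsub At)ᗮ := Submodule.sub_starProjection_mem_orthogonal z
    have hchar : ∀ v : At.adjoint.domain,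
        (inner ℂ (At.adjoint v) (S.Agaminv y) : ℂ) = inner ℂ ((v : H)) y := by
      intro v
      set vm : S.Amax'.domain := ⟨(v : H), hadj.1 v.2⟩ with hvm
      have hvv : S.Amax' vm = At.adjoint v := (hadj.2 (x := v) (y := vm) rfl).symm
      have hwmem : S.vzeta vm ∈ S.Wsub At :=
        Submodule.le_topologicalClosure _ (Submodule.subset_span ⟨vm, v.2, rfl⟩)
      have h0 : (inner ℂ (S.vzeta vm) y : ℂ) = 0 := (Submodule.mem_orthogonal _ y).mp hyo _ hwmem
      have hvz : S.vzeta vm = (v : H) - S.Agaminv (At.adjoint v) := by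
        show (vm : H) - S.Agamstarinv (S.Amax' vm) = (v : H) - S.Agaminv (At.adjoint v)
        rw [S.agamstarinv_eq hsa, hvv]
      rw [hvz, inner_sub_left, sub_eq_zero] at h0
      calc (inner ℂ (At.adjoint v) (S.Agaminv y) : ℂ)
          = inner ℂ (S.Agaminv (At.adjoint v)) y := (S.agaminv_symm hsa _ _).symm
        _ = inner ℂ ((v : H)) y := h0.symm
    have hg := mem_of_forall_adjoint_inner hAtd hcl hchar
    rw [LinearPMap.mem_graph_iff] at hg
    obtain ⟨x0, hx01', hx02'⟩ := hg
    have hx01 : (x0 : H) = S.Agaminv y := hx01'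
    have hx02 : At x0 = y := hx02'
    set x0m : S.Amax.domain := ⟨(x0 : H), h2.1 x0.2⟩ with hx0m
    have hx0mv : S.Amax x0m = y := by
      rw [← h2.2 (x := x0) (y := x0m) rfl]
      exact hx02
    have hyz : (inner ℂ y z : ℂ) = ((‖y‖ : ℝ) : ℂ) ^ 2 := by
      have hz2 : z = y + ((S.Wsub At).orthogonalProjectionOnto z : H) := by rw [hydef]; abel
      rw [hz2, inner_add_right]
      have hyp : (inner ℂ y (((S.Wsub At).orthogonalProjectionOnto z : H)) : ℂ) = 0 :=
        (Submodule.mem_orthogonal' _ y).mp hyo _ (SetLike.coe_mem _)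
      rw [hyp, add_zero, inner_self_eq_norm_sq_to_K]
      norm_cast
    have hstep : ∀ n : ℕ, cb * ‖z‖ ^ 2 ≤ (inner ℂ (S.Amax u) z : ℂ).re - n * ‖y‖ ^ 2 := by
      intro n
      set un : S.Amax.domain := u - ((n : ℕ) : ℂ) • x0m with hun
      have hunmem : (un : H) ∈ At.domain := by
        show (u : H) - ((n : ℕ) : ℂ) • (x0 : H) ∈ At.domain
        exact sub_mem hu (Submodule.smul_mem _ _ x0.2)
      have hAmaxun : S.Amax un = S.Amax u - ((n : ℕ) : ℂ) • y := by
        rw [hun, LinearPMap.map_sub, LinearPMap.map_smul, hx0mv]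
      have huzn : S.uzeta un = z := by
        show ((un : H)) - S.Agaminv (S.Amax un) = z
        rw [hAmaxun]
        have hlin : S.Agaminv (S.Amax u - ((n : ℕ) : ℂ) • y)
            = S.Agaminv (S.Amax u) - ((n : ℕ) : ℂ) • S.Agaminv y := by
          simp [map_sub, map_smul]
        rw [hlin, ← hx01]
        have hco : ((un : H)) = (u : H) - ((n : ℕ) : ℂ) • (x0 : H) := rfl
        rw [hco, hzdef]
        show (u : H) - ((n : ℕ) : ℂ) • (x0 : H)
            - (S.Agaminv (S.Amax u) - ((n : ℕ) : ℂ) • (x0 : H))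
            = (u : H) - S.Agaminv (S.Amax u)
        abel
      have hk := key hcb un hunmem
      rw [huzn, hAmaxun, inner_sub_left, inner_smul_left, hyz] at hk
      have hconj : (starRingEnd ℂ) (((n : ℕ) : ℂ)) = ((n : ℕ) : ℂ) := by simp
      rw [hconj] at hk
      have hre : ((inner ℂ (S.Amax u) z : ℂ) - ((n : ℕ) : ℂ) * ((‖y‖ : ℝ) : ℂ) ^ 2).re
          = (inner ℂ (S.Amax u) z : ℂ).re - n * ‖y‖ ^ 2 := by
        have hcast : (((n : ℕ) : ℂ)) * ((‖y‖ : ℝ) : ℂ) ^ 2 = (((n * ‖y‖ ^ 2 : ℝ)) : ℂ) := by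
          push_cast
          ring
        rw [hcast, Complex.sub_re, Complex.ofReal_re]
      rw [hre] at hk
      exact hk
    have hy0 : y = 0 := by
      by_contra hne
      have hpos : 0 < ‖y‖ ^ 2 := pow_pos (norm_pos_iff.mpr hne) 2
      obtain ⟨n, hn⟩ := exists_nat_gt (((inner ℂ (S.Amax u) z : ℂ).re - cb * ‖z‖ ^ 2) / ‖y‖ ^ 2)
      have hs := hstep n
      rw [div_lt_iff₀ hpos] at hn
      linarith
    have hzeq : z = ((S.Wsub At).orthogonalProjectionOnto z : H) := by
      have h5 : z - ((S.Wsub At).orthogonalProjectionOnto z : H) = 0 := by rw [← hydef]; exact hy0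
      rwa [sub_eq_zero] at h5
    rw [hzeq]
    exact SetLike.coe_mem _
  constructor
  · apply Submodule.topologicalClosure_minimal
    · rw [Submodule.span_le]
      rintro x ⟨u, hu, rfl⟩
      exact hVWmem u hu
    · exact S.isClosed_Wsub At
  · intro c hc r hr
    obtain ⟨zt, hzt1, hzt2⟩ := hr
    have hg : ((zt : H), T zt) ∈ T.graph := T.mem_graph zt
    have hg2 : ((zt : H), T zt) ∈ S.Tgraph At := by
      rw [← hT]
      exact hg
    obtain ⟨u, hu, hp1', hp2'⟩ := hg2
    have hp1 : (zt : H) = S.uzeta u := hp1'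
    have hp2 : (T zt : H) = projCl (S.Wsub At) (S.isClosed_Wsub At) (S.Amax u) := hp2'
    have hmemW : S.uzeta u ∈ S.Wsub At := hVWmem u hu
    have hproj : (inner ℂ (projCl (S.Wsub At) (S.isClosed_Wsub At) (S.Amax u)) (S.uzeta u) : ℂ)
        = inner ℂ (S.Amax u) (S.uzeta u) := by
      have hpc : projCl (S.Wsub At) (S.isClosed_Wsub At) (S.Amax u)
          = ((S.Wsub At).orthogonalProjectionOnto (S.Amax u) : H) := rfl
      rw [hpc]
      have hperp : S.Amax u - ((S.Wsub At).orthogonalProjectionOnto (S.Amax u) : H)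
          ∈ (S.Wsub At)ᗮ := Submodule.sub_starProjection_mem_orthogonal _
      have h0 : (inner ℂ (S.Amax u - ((S.Wsub At).orthogonalProjectionOnto (S.Amax u) : H))
          (S.uzeta u) : ℂ) = 0 := (Submodule.mem_orthogonal' _ _).mp hperp _ hmemW
      rw [inner_sub_left, sub_eq_zero] at h0
      exact h0.symm
    have hz1 : ‖S.uzeta u‖ = 1 := by rw [← hp1]; exact hzt1
    have hk := key hc u hu
    rw [hz1] at hk
    rw [hzt2, hp2, hp1, hproj]
    simpa using hk

end GrubbExt
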